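/- Let (M,d) be a metric space and k a kernel on M. Then for every strictly positive measurable function f : M → (0,∞) and all (x,y) ∈ M × M, one has the identity in [0,∞]: Ψ_Υ^{k⊕k}(log(f⊗f))(x,y) = Ψ_Υ^k(log f)(x) + Ψ_Υ^k(log f)(y), where (f⊗f)(u,v) = f(u)f(v). -/
import Mathlib


open MeasureTheory ENNReal

/-- `Upsilon r = exp r - 1 - r`. -/
noncomputable def Upsilon (r : ℝ) : ℝ := Real.exp r - 1 - r

/-- The operator `Ψ_Υ^k(f)(x) = ∫_{M∖{x}} Υ(f(y) − f(x)) k(x,dy)` with values in `[0,∞]`. -/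
noncomputable def PsiUpsilon {M : Type*} [MeasurableSpace M]
    (k : M → Measure M) (f : M → ℝ) (x : M) : ℝ≥0∞ :=
  ∫⁻ y in {x}ᶜ, ENNReal.ofReal (Upsilon (f y - f x)) ∂(k x)

/-- The nonlocal Fisher information `i_k(f) = ∫_M f(x) Ψ_Υ^k(log f)(x) dμ(x)`. -/
noncomputable def nlFisher {M : Type*} [MeasurableSpace M]
    (μ : Measure M) (k : M → Measure M) (f : M → ℝ) : ℝ≥0∞ :=
  ∫⁻ x, ENNReal.ofReal (f x) * PsiUpsilon k (fun y => Real.log (f y)) x ∂μ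

/-- Tensorization of kernels: `(k₁⊕k₂)((x,y),A) = k₁(x, A^y) + k₂(y, A_x)`, realized via
pushforward measures (on measurable `A` these agree with the section formula). -/
noncomputable def tensorKernel {M₁ M₂ : Type*} [MeasurableSpace M₁] [MeasurableSpace M₂]
    (k₁ : M₁ → Measure M₁) (k₂ : M₂ → Measure M₂) : M₁ × M₂ → Measure (M₁ × M₂) :=
  fun p => (k₁ p.1).map (fun u => (u, p.2)) + (k₂ p.2).map (fun v => (p.1, v))

/-- For strictly positive measurable `f` one has, in `[0,∞]`,
`Ψ_Υ^{k⊕k}(log(f⊗f))(x,y) = Ψ_Υ^k(log f)(x) + Ψ_Υ^k(log f)(y)`. -/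
theorem PsiUpsilon_tensor_log
    {M : Type*} [MetricSpace M] [MeasurableSpace M] [BorelSpace M]
    (k : ProbabilityTheory.Kernel M M) (hk : ∀ x, SigmaFinite (k x))
    (f : M → ℝ) (hf : Measurable f) (hfpos : ∀ x, 0 < f x) (x y : M) :
    PsiUpsilon (tensorKernel (fun a => k a) (fun a => k a))
        (fun p => Real.log (f p.1 * f p.2)) (x, y)
      = PsiUpsilon (fun a => k a) (fun u => Real.log (f u)) x
        + PsiUpsilon (fun a => k a) (fun v => Real.log (f v)) y := by
  have hU : Measurable Upsilon := by
    unfold Upsilon; exact (Real.measurable_exp.sub measurable_const).sub measurable_id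
  have hms : MeasurableSet ({(x, y)}ᶜ : Set (M × M)) :=
    (measurableSet_singleton _).compl
  have hg : Measurable fun p : M × M =>
      ENNReal.ofReal (Upsilon (Real.log (f p.1 * f p.2) - Real.log (f x * f y))) := by
    apply ENNReal.measurable_ofReal.comp
    exact hU.comp (((hf.comp measurable_fst).mul (hf.comp measurable_snd)).log.sub
      measurable_const)
  have h1 : Measurable (fun u : M => (u, y)) := measurable_prodMk_right
  have h2 : Measurable (fun v : M => (x, v)) := measurable_prodMk_left
  have hp1 : (fun u : M => (u, y)) ⁻¹' {(x, y)}ᶜ = {x}ᶜ := by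
    ext u; simp [Prod.ext_iff]
  have hp2 : (fun v : M => (x, v)) ⁻¹' {(x, y)}ᶜ = {y}ᶜ := by
    ext v; simp [Prod.ext_iff]
  simp only [PsiUpsilon, tensorKernel]
  rw [Measure.restrict_add, lintegral_add_measure,
    Measure.restrict_map h1 hms, Measure.restrict_map h2 hms,
    lintegral_map hg h1, lintegral_map hg h2, hp1, hp2]
  congr 1
  · apply lintegral_congr
    intro u
    congr 2
    rw [Real.log_mul (hfpos u).ne' (hfpos y).ne', Real.log_mul (hfpos x).ne' (hfpos y).ne']
    ring
  · apply lintegral_congr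
    intro v
    congr 2
    rw [Real.log_mul (hfpos x).ne' (hfpos v).ne', Real.log_mul (hfpos x).ne' (hfpos y).ne']
    ring
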